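/- Let U be the weighted unilateral shift on H = ℓ²(ℕ,ℂ) with U e_n = √(1−q^{n+1}) e_{n+1}. Then the commutator U U* − U* U is a compact operator on H, and the closed star-subalgebra of bounded operators on H generated by U contains every compact operator on H. -/

import Mathlib

open MeasureTheory InnerProductSpace

noncomputable section

/-- `H = ℓ²(ℕ, ℂ)`. -/
abbrev H : Type := lp (fun _ : ℕ => ℂ) 2

/-- The standard orthonormal basis `e n` of `ℓ²(ℕ, ℂ)`. -/
noncomputable def e (n : ℕ) : H := lp.single 2 n 1

namespace Aux

open ENNReal

local notation "⟪" x ", " y "⟫" => @inner ℂ H _ x y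

lemma e_apply (n m : ℕ) : (e n) m = if m = n then (1:ℂ) else 0 := by
  simp [e, lp.single_apply, Pi.single_apply]

lemma inner_e_left (n : ℕ) (x : H) : ⟪e n, x⟫ = x n := by
  simp [e, lp.inner_single_left]

lemma inner_e_e (a b : ℕ) : ⟪e a, e b⟫ = if a = b then (1:ℂ) else 0 := by
  rw [inner_e_left, e_apply]

lemma coord_eq_inner (x : H) (n : ℕ) : x n = ⟪e n, x⟫ := (inner_e_left n x).symm

lemma norm_le_of_coord {z x : H} {c : ℝ} (hc : 0 ≤ c)
    (h : ∀ n, ‖z n‖ ≤ c * ‖x n‖) : ‖z‖ ≤ c * ‖x‖ := by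
  have hp : 0 < (2 : ℝ≥0∞).toReal := by norm_num
  refine lp.norm_le_of_tsum_le hp (by positivity) ?_
  have hsum : Summable (fun n => ‖x n‖ ^ (2:ℝ≥0∞).toReal) := (lp.memℓp x).summable hp
  calc ∑' n, ‖z n‖ ^ (2:ℝ≥0∞).toReal
      ≤ ∑' n, c ^ (2:ℝ≥0∞).toReal * ‖x n‖ ^ (2:ℝ≥0∞).toReal := by
        refine Summable.tsum_le_tsum (fun n => ?_) ((lp.memℓp z).summable hp) (hsum.mul_left _)
        rw [← Real.mul_rpow hc (norm_nonneg _)]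
        exact Real.rpow_le_rpow (norm_nonneg _) (h n) (le_of_lt hp)
    _ = c ^ (2:ℝ≥0∞).toReal * ∑' n, ‖x n‖ ^ (2:ℝ≥0∞).toReal := tsum_mul_left
    _ = (c * ‖x‖) ^ (2:ℝ≥0∞).toReal := by
        rw [← lp.norm_rpow_eq_tsum hp, ← Real.mul_rpow hc (norm_nonneg _)]

noncomputable def rk (x y : H) : H →L[ℂ] H := (innerSL ℂ y).smulRight x

lemma rk_apply (x y z : H) : rk x y z = ⟪y, z⟫ • x := rfl

lemma norm_rk_le (x y : H) : ‖rk x y‖ ≤ ‖y‖ * ‖x‖ := by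
  refine ContinuousLinearMap.opNorm_le_bound _ (by positivity) fun z => ?_
  rw [rk_apply, norm_smul]
  calc ‖⟪y, z⟫‖ * ‖x‖ ≤ ‖y‖ * ‖z‖ * ‖x‖ := by
        have := norm_inner_le_norm (𝕜 := ℂ) y z
        exact mul_le_mul_of_nonneg_right this (norm_nonneg _)
    _ = ‖y‖ * ‖x‖ * ‖z‖ := by ring

lemma rk_add (x y₁ y₂ : H) : rk x (y₁ + y₂) = rk x y₁ + rk x y₂ := by
  ext z; simp [rk_apply, inner_add_left, add_smul]

lemma rk_conj_smul (x y : H) (a : ℂ) :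
    rk x (a • y) = (starRingEnd ℂ a) • rk x y := by
  ext z; simp [rk_apply, inner_smul_left, smul_smul]; exact Or.inl (mul_comm _ _)

lemma rk_sub (x y₁ y₂ : H) : rk x (y₁ - y₂) = rk x y₁ - rk x y₂ := by
  ext z; simp [rk_apply, inner_sub_left, sub_smul]

lemma rk_sum (x : H) {ι : Type*} (s : Finset ι) (f : ι → H) :
    rk x (∑ j ∈ s, f j) = ∑ j ∈ s, rk x (f j) := by
  induction s using Finset.cons_induction with
  | empty => ext z; simp [rk_apply]
  | cons a s ha ih => rw [Finset.sum_cons, Finset.sum_cons, rk_add, ih]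

lemma isCompact_rk (x y : H) : IsCompactOperator ⇑(rk x y) := by
  refine ⟨(fun c : ℂ => c • x) '' Metric.closedBall 0 (‖y‖ + 1), ?_, ?_⟩
  · exact (isCompact_closedBall 0 _).image (continuous_id.smul continuous_const)
  · filter_upwards [Metric.ball_mem_nhds (0 : H) one_pos] with z hz
    refine ⟨⟪y, z⟫, ?_, rfl⟩
    rw [Metric.mem_closedBall, dist_zero_right]
    calc ‖⟪y, z⟫‖ ≤ ‖y‖ * ‖z‖ := norm_inner_le_norm y z
      _ ≤ ‖y‖ * 1 := by
          refine mul_le_mul_of_nonneg_left ?_ (norm_nonneg _)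
          rw [Metric.mem_ball, dist_zero_right] at hz
          exact hz.le
      _ ≤ ‖y‖ + 1 := by linarith [norm_nonneg y]

lemma isCompact_finsum {ι : Type*} (s : Finset ι) (A : ι → H →L[ℂ] H)
    (h : ∀ i ∈ s, IsCompactOperator ⇑(A i)) :
    IsCompactOperator ⇑(∑ i ∈ s, A i) := by
  induction s using Finset.cons_induction with
  | empty => simpa using isCompactOperator_zero
  | cons a s ha ih =>
      rw [Finset.sum_cons]
      have : ⇑(A a + ∑ x ∈ s, A x) = ⇑(A a) + ⇑(∑ x ∈ s, A x) := rfl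
      rw [this]
      exact (h a (Finset.mem_cons_self a s)).add
        (ih fun i hi => h i (Finset.mem_cons_of_mem hi))

section Main

open ContinuousLinearMap

variable {q : ℝ} (hq0 : 0 < q) (hq1 : q < 1) (U : H →L[ℂ] H)
  (hU : ∀ n : ℕ, U (e n) = (Real.sqrt (1 - q ^ (n + 1)) : ℂ) • e (n + 1))

include hq0 hq1 hU

lemma key_pos (n : ℕ) : 0 < 1 - q ^ (n + 1) := by
  have : q ^ (n + 1) < 1 := pow_lt_one₀ hq0.le hq1 (Nat.succ_ne_zero n)
  linarith

lemma Ua_e_zero : adjoint U (e 0) = 0 := by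
  refine lp.ext (funext fun m => ?_)
  rw [coord_eq_inner, adjoint_inner_right, hU]
  rw [inner_smul_left, inner_e_e]; simp

lemma Ua_e_succ (n : ℕ) :
    adjoint U (e (n + 1)) = (Real.sqrt (1 - q ^ (n + 1)) : ℂ) • e n := by
  refine lp.ext (funext fun m => ?_)
  rw [coord_eq_inner, adjoint_inner_right, hU]
  rw [lp.coeFn_smul, Pi.smul_apply, coord_eq_inner (e n) m]
  rw [inner_smul_left, inner_e_e, inner_e_e]
  by_cases h : m = n
  · subst h; simp
  · have h' : ¬ (m + 1 = n + 1) := fun hh => h (Nat.succ_injective hh)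
    simp [h, h']

lemma UaU_e (n : ℕ) :
    adjoint U (U (e n)) = ((1 - q ^ (n + 1) : ℝ) : ℂ) • e n := by
  rw [hU, _root_.map_smul, Ua_e_succ hq0 hq1 U hU, smul_smul]
  norm_cast
  rw [Real.mul_self_sqrt (key_pos hq0 hq1 U hU n).le]

lemma UUa_e (n : ℕ) :
    U (adjoint U (e n)) = ((1 - q ^ n : ℝ) : ℂ) • e n := by
  cases n with
  | zero => rw [Ua_e_zero hq0 hq1 U hU]; simp
  | succ n =>
      rw [Ua_e_succ hq0 hq1 U hU, _root_.map_smul, hU, smul_smul]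
      norm_cast
      rw [Real.mul_self_sqrt (key_pos hq0 hq1 U hU n).le]

omit hq0 hq1 hU

lemma diag_coord {T : H →L[ℂ] H} {μ : ℕ → ℝ} (hsa : star T = T)
    (hT : ∀ n, T (e n) = (μ n : ℂ) • e n) (x : H) (n : ℕ) :
    (T x) n = (μ n : ℂ) * x n := by
  have hadj : adjoint T = T := by rw [← star_eq_adjoint, hsa]
  rw [coord_eq_inner, ← adjoint_inner_left, hadj, hT, inner_smul_left,
    inner_e_left]
  simp

lemma sum_rk_coord (μ : ℕ → ℂ) (N : ℕ) (x : H) (m : ℕ) :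
    ((∑ n ∈ Finset.range N, μ n • rk (e n) (e n)) x) m
      = if m < N then μ m * x m else 0 := by
  rw [ContinuousLinearMap.sum_apply, lp.coeFn_sum, Finset.sum_apply]
  have hterm : ∀ n, ((μ n • rk (e n) (e n)) x) m
      = if n = m then μ n * x n else 0 := by
    intro n
    rw [ContinuousLinearMap.smul_apply, lp.coeFn_smul, Pi.smul_apply,
      rk_apply, lp.coeFn_smul, Pi.smul_apply, e_apply, inner_e_left]
    by_cases h : n = m
    · subst h; simp
    · rw [if_neg (fun hh : m = n => h hh.symm), if_neg h]
      simp
  simp only [hterm]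
  rw [Finset.sum_ite_eq' (Finset.range N) m (fun n => μ n * x n)]
  simp [Finset.mem_range]

include hq0 hq1 hU

lemma comm_e (n : ℕ) :
    (U * adjoint U - adjoint U * U) (e n)
      = ((q ^ (n + 1) - q ^ n : ℝ) : ℂ) • e n := by
  rw [ContinuousLinearMap.sub_apply, ContinuousLinearMap.mul_apply,
    ContinuousLinearMap.mul_apply, UUa_e hq0 hq1 U hU, UaU_e hq0 hq1 U hU,
    ← sub_smul]
  norm_cast
  ring_nf

lemma comm_star :
    star (U * adjoint U - adjoint U * U) = U * adjoint U - adjoint U * U := by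
  simp [star_sub, star_mul, star_eq_adjoint, adjoint_adjoint]

theorem comm_compact : IsCompactOperator ⇑(U * adjoint U - adjoint U * U) := by
  set C : H →L[ℂ] H := U * adjoint U - adjoint U * U with hC
  set F : ℕ → H →L[ℂ] H :=
    fun N => ∑ n ∈ Finset.range N, (((q ^ (n+1) - q ^ n : ℝ)) : ℂ) • rk (e n) (e n)
      with hF
  have hFc : ∀ N, IsCompactOperator ⇑(F N) := by
    intro N
    refine isCompact_finsum _ _ fun n _ => ?_
    have : ⇑((((q ^ (n+1) - q ^ n : ℝ)) : ℂ) • rk (e n) (e n))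
        = (((q ^ (n+1) - q ^ n : ℝ)) : ℂ) • ⇑(rk (e n) (e n)) := rfl
    rw [this]
    exact (isCompact_rk _ _).smul _
  have hbound : ∀ N, ‖F N - C‖ ≤ q ^ N := by
    intro N
    refine ContinuousLinearMap.opNorm_le_bound _ (by positivity) fun x => ?_
    refine norm_le_of_coord (by positivity) fun m => ?_
    have hcd : ((F N - C) x) m
        = (if m < N then ((q ^ (m+1) - q ^ m : ℝ) : ℂ) * x m else 0)
          - ((q ^ (m+1) - q ^ m : ℝ) : ℂ) * x m := by
      rw [ContinuousLinearMap.sub_apply, lp.coeFn_sub, Pi.sub_apply,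
        hF, sum_rk_coord, diag_coord (comm_star hq0 hq1 U hU)
          (comm_e hq0 hq1 U hU) x m]
    rw [hcd]
    by_cases h : m < N
    · simp only [if_pos h, sub_self, norm_zero]
      positivity
    · simp only [if_neg h, zero_sub, norm_neg, norm_mul]
      rw [Complex.norm_real, Real.norm_eq_abs]
      have h1 : |q ^ (m+1) - q ^ m| = q ^ m - q ^ (m+1) := by
        rw [abs_sub_comm, abs_of_nonneg]
        have : q ^ (m+1) ≤ q ^ m := by
          rw [pow_succ]
          nlinarith [pow_pos hq0 m]
        linarith
      have h2 : q ^ m - q ^ (m+1) ≤ q ^ N := by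
        have hm : N ≤ m := le_of_not_gt h
        have : q ^ m ≤ q ^ N := pow_le_pow_of_le_one hq0.le hq1.le hm
        nlinarith [pow_pos hq0 (m+1)]
      calc |q ^ (m+1) - q ^ m| * ‖x m‖ ≤ q ^ N * ‖x m‖ := by
            rw [h1]; exact mul_le_mul_of_nonneg_right h2 (norm_nonneg _)
        _ = q ^ N * ‖x m‖ := rfl
  have htend : Filter.Tendsto F Filter.atTop (nhds C) := by
    rw [tendsto_iff_norm_sub_tendsto_zero]
    refine squeeze_zero (fun N => norm_nonneg _) hbound ?_
    exact tendsto_pow_atTop_nhds_zero_of_lt_one hq0.le hq1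
  exact isCompactOperator_of_tendsto htend (Filter.Eventually.of_forall hFc)

include hq0 hq1 hU

lemma memU : U ∈ (StarAlgebra.adjoin ℂ {U}).topologicalClosure :=
  StarSubalgebra.le_topologicalClosure _
    (StarAlgebra.subset_adjoin ℂ {U} (Set.mem_singleton U))

lemma memUa : adjoint U ∈ (StarAlgebra.adjoin ℂ {U}).topologicalClosure := by
  rw [← star_eq_adjoint]
  exact star_mem (memU hq0 hq1 U hU)

lemma memD : (1 - adjoint U * U : H →L[ℂ] H)
    ∈ (StarAlgebra.adjoin ℂ {U}).topologicalClosure :=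
  sub_mem (one_mem _) (mul_mem (memUa hq0 hq1 U hU) (memU hq0 hq1 U hU))

lemma D_e (n : ℕ) :
    (1 - adjoint U * U : H →L[ℂ] H) (e n) = ((q ^ (n + 1) : ℝ) : ℂ) • e n := by
  rw [ContinuousLinearMap.sub_apply, ContinuousLinearMap.mul_apply,
    UaU_e hq0 hq1 U hU, ContinuousLinearMap.one_apply]
  have : e n = ((1 : ℝ) : ℂ) • e n := by norm_num
  nth_rewrite 1 [this]
  rw [← sub_smul]
  norm_cast
  ring_nf

lemma D_star : star (1 - adjoint U * U : H →L[ℂ] H) = 1 - adjoint U * U := by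
  simp [star_sub, star_mul, star_eq_adjoint, adjoint_adjoint]

lemma Dpow_e (k n : ℕ) :
    ((1 - adjoint U * U : H →L[ℂ] H) ^ k) (e n)
      = ((q ^ ((n + 1) * k) : ℝ) : ℂ) • e n := by
  induction k with
  | zero => simp
  | succ k ih =>
      rw [pow_succ', ContinuousLinearMap.mul_apply, ih, _root_.map_smul,
        D_e hq0 hq1 U hU, smul_smul]
      norm_cast
      rw [← pow_add]
      ring_nf

lemma Dpow_star (k : ℕ) :
    star ((1 - adjoint U * U : H →L[ℂ] H) ^ k) = (1 - adjoint U * U) ^ k := by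
  rw [star_pow, D_star hq0 hq1 U hU]

lemma memP0 : rk (e 0) (e 0) ∈ (StarAlgebra.adjoin ℂ {U}).topologicalClosure := by
  set G : ℕ → H →L[ℂ] H :=
    fun k => (((q ^ k)⁻¹ : ℝ) : ℂ) • (1 - adjoint U * U) ^ k with hG
  have hGmem : ∀ k, G k ∈ (StarAlgebra.adjoin ℂ {U}).topologicalClosure :=
    fun k => SMulMemClass.smul_mem _ (pow_mem (memD hq0 hq1 U hU) k)
  have hqk : ∀ k : ℕ, (q : ℝ) ^ k ≠ 0 := fun k => (pow_pos hq0 k).ne'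
  have hG_e : ∀ k n, G k (e n) = ((q ^ (n * k) : ℝ) : ℂ) • e n := by
    intro k n
    rw [hG]
    rw [ContinuousLinearMap.smul_apply, Dpow_e hq0 hq1 U hU, smul_smul]
    norm_cast
    rw [add_mul, one_mul, pow_add]
    field_simp
  have hG_star : ∀ k, star (G k) = G k := by
    intro k
    rw [hG]
    rw [star_smul, Dpow_star hq0 hq1 U hU, RCLike.star_def, Complex.conj_ofReal]
  have hbound : ∀ k, ‖G k - rk (e 0) (e 0)‖ ≤ q ^ k := by
    intro k
    refine ContinuousLinearMap.opNorm_le_bound _ (by positivity) fun x => ?_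
    refine norm_le_of_coord (by positivity) fun m => ?_
    have hcd : ((G k - rk (e 0) (e 0)) x) m
        = ((q ^ (m * k) : ℝ) : ℂ) * x m - (if m = 0 then x 0 else 0) := by
      rw [ContinuousLinearMap.sub_apply, lp.coeFn_sub, Pi.sub_apply,
        diag_coord (hG_star k) (hG_e k) x m]
      congr 1
      rw [rk_apply, lp.coeFn_smul, Pi.smul_apply, e_apply, inner_e_left]
      by_cases h : m = 0 <;> simp [h]
    rw [hcd]
    cases m with
    | zero =>
        simp only [Nat.zero_mul, pow_zero, Complex.ofReal_one, one_mul,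
          if_pos rfl, if_true, sub_self, norm_zero]
        positivity
    | succ m =>
        simp only [if_neg (Nat.succ_ne_zero m), sub_zero, norm_mul,
          Complex.norm_real, Real.norm_eq_abs]
        have h2 : q ^ ((m + 1) * k) ≤ q ^ k :=
          pow_le_pow_of_le_one hq0.le hq1.le (Nat.le_mul_of_pos_left k (Nat.succ_pos m))
        rw [abs_of_nonneg (pow_nonneg hq0.le _)]
        exact mul_le_mul_of_nonneg_right h2 (norm_nonneg _)
  have htend : Filter.Tendsto G Filter.atTop (nhds (rk (e 0) (e 0))) := by
    rw [tendsto_iff_norm_sub_tendsto_zero]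
    refine squeeze_zero (fun N => norm_nonneg _) hbound ?_
    exact tendsto_pow_atTop_nhds_zero_of_lt_one hq0.le hq1
  have := (StarSubalgebra.isClosed_topologicalClosure
    (StarAlgebra.adjoin ℂ {U})).mem_of_tendsto htend
    (Filter.Eventually.of_forall fun k => hGmem k)
  exact this

omit hq0 hq1 hU

noncomputable def cc (q : ℝ) (j : ℕ) : ℝ :=
  ∏ i ∈ Finset.range j, Real.sqrt (1 - q ^ (i + 1))

include hq0 hq1 hU

lemma cc_pos (j : ℕ) : 0 < cc q j := by
  refine Finset.prod_pos fun i _ => Real.sqrt_pos.mpr (key_pos hq0 hq1 U hU i)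

lemma Upow_e0 (j : ℕ) : (U ^ j) (e 0) = ((cc q j : ℝ) : ℂ) • e j := by
  induction j with
  | zero => simp [cc]
  | succ j ih =>
      rw [pow_succ', ContinuousLinearMap.mul_apply, ih, _root_.map_smul, hU,
        smul_smul]
      rw [show cc q (j+1) = cc q j * Real.sqrt (1 - q ^ (j+1)) from
        Finset.prod_range_succ _ j]
      norm_cast

lemma memE (i j : ℕ) :
    rk (e i) (e j) ∈ (StarAlgebra.adjoin ℂ {U}).topologicalClosure := by
  have hM : (U ^ i) * (rk (e 0) (e 0) * star (U ^ j))
      = ((cc q i * cc q j : ℝ) : ℂ) • rk (e i) (e j) := by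
    refine ContinuousLinearMap.ext fun x => ?_
    rw [ContinuousLinearMap.mul_apply, ContinuousLinearMap.mul_apply,
      star_eq_adjoint, rk_apply, ContinuousLinearMap.adjoint_inner_right,
      Upow_e0 hq0 hq1 U hU j, inner_smul_left, Complex.conj_ofReal,
      _root_.map_smul, Upow_e0 hq0 hq1 U hU i,
      ContinuousLinearMap.smul_apply, rk_apply, smul_smul, smul_smul]
    congr 1
    push_cast
    ring
  have hMmem : (U ^ i) * (rk (e 0) (e 0) * star (U ^ j))
      ∈ (StarAlgebra.adjoin ℂ {U}).topologicalClosure :=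
    mul_mem (pow_mem (memU hq0 hq1 U hU) i)
      (mul_mem (memP0 hq0 hq1 U hU) (star_mem (pow_mem (memU hq0 hq1 U hU) j)))
  have hne : (cc q i * cc q j : ℝ) ≠ 0 :=
    (mul_pos (cc_pos hq0 hq1 U hU i) (cc_pos hq0 hq1 U hU j)).ne'
  have heq : rk (e i) (e j) = (((cc q i * cc q j)⁻¹ : ℝ) : ℂ)
      • ((U ^ i) * (rk (e 0) (e 0) * star (U ^ j))) := by
    rw [hM, smul_smul]
    norm_cast
    rw [inv_mul_cancel₀ hne]
    exact (one_smul _ _).symm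
  rw [heq]
  exact SMulMemClass.smul_mem _ hMmem

omit hq0 hq1 hU

lemma single_eq_smul_e (j : ℕ) (a : ℂ) : lp.single 2 j a = a • e j := by
  rw [e, ← lp.single_smul, smul_eq_mul, mul_one]

lemma norm_e (i : ℕ) : ‖e i‖ = 1 := by
  rw [e]
  have := lp.norm_single (E := fun _ : ℕ => ℂ) (p := (2 : ℝ≥0∞)) (by norm_num)
    i (1 : ℂ)
  simpa using this

include hq0 hq1 hU

lemma memRk (i : ℕ) (y : H) :
    rk (e i) y ∈ (StarAlgebra.adjoin ℂ {U}).topologicalClosure := by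
  set S : ℕ → H := fun N => ∑ j ∈ Finset.range N, lp.single 2 j (y j) with hSdef
  have hS : Filter.Tendsto S Filter.atTop (nhds y) :=
    (lp.hasSum_single (by norm_num : (2:ℝ≥0∞) ≠ ⊤) y).tendsto_sum_nat
  have hmem : ∀ N, rk (e i) (S N)
      ∈ (StarAlgebra.adjoin ℂ {U}).topologicalClosure := by
    intro N
    rw [hSdef]
    simp only
    rw [rk_sum]
    refine sum_mem fun j _ => ?_
    rw [single_eq_smul_e, rk_conj_smul]
    exact SMulMemClass.smul_mem _ (memE hq0 hq1 U hU i j)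
  have htend : Filter.Tendsto (fun N => rk (e i) (S N)) Filter.atTop
      (nhds (rk (e i) y)) := by
    rw [tendsto_iff_norm_sub_tendsto_zero]
    have hb : ∀ N, ‖rk (e i) (S N) - rk (e i) y‖ ≤ ‖S N - y‖ := by
      intro N
      rw [← rk_sub]
      calc ‖rk (e i) (S N - y)‖ ≤ ‖S N - y‖ * ‖e i‖ := norm_rk_le _ _
        _ = ‖S N - y‖ := by rw [norm_e, mul_one]
    refine squeeze_zero (fun N => norm_nonneg _) hb ?_
    exact tendsto_iff_norm_sub_tendsto_zero.mp hS
  exact (StarSubalgebra.isClosed_topologicalClosure _).mem_of_tendsto htend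
    (Filter.Eventually.of_forall hmem)

omit hq0 hq1 hU

noncomputable def trunc (N : ℕ) (y : H) : H :=
  ∑ i ∈ Finset.range N, lp.single 2 i (y i)

lemma rk_coord (i m : ℕ) (w x : H) :
    (rk (e i) w x) m = if m = i then ⟪w, x⟫ else 0 := by
  rw [rk_apply, lp.coeFn_smul, Pi.smul_apply, e_apply]
  by_cases h : m = i <;> simp [h]

lemma trunc_coord (N : ℕ) (y : H) (m : ℕ) :
    (trunc N y) m = if m < N then y m else 0 := by
  rw [trunc, lp.coeFn_sum, Finset.sum_apply]
  have hterm : ∀ i, (lp.single 2 i (y i) : H) m = if i = m then y i else 0 := by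
    intro i
    by_cases h : m = i
    · subst h; simp [lp.single_apply_self]
    · rw [lp.single_apply_ne 2 i _ h, if_neg (fun hh : i = m => h hh.symm)]
  simp only [hterm]
  rw [Finset.sum_ite_eq' (Finset.range N) m (fun i => y i)]
  simp [Finset.mem_range]

lemma trunc_lip (N : ℕ) (y₁ y₂ : H) :
    ‖trunc N y₁ - trunc N y₂‖ ≤ ‖y₁ - y₂‖ := by
  have h := norm_le_of_coord (z := trunc N y₁ - trunc N y₂) (x := y₁ - y₂)
    (c := 1) zero_le_one ?_
  · simpa using h
  · intro m
    rw [lp.coeFn_sub, Pi.sub_apply, trunc_coord, trunc_coord,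
      lp.coeFn_sub, Pi.sub_apply, one_mul]
    by_cases h : m < N
    · simp [h]
    · simp [h]

lemma tendsto_trunc (y : H) :
    Filter.Tendsto (fun N => trunc N y) Filter.atTop (nhds y) :=
  (lp.hasSum_single (by norm_num : (2:ℝ≥0∞) ≠ ⊤) y).tendsto_sum_nat

lemma trunc_uniform {S : Set H} (hS : IsCompact S) {ε : ℝ} (hε : 0 < ε) :
    ∃ N₀ : ℕ, ∀ N ≥ N₀, ∀ y ∈ S, ‖trunc N y - y‖ ≤ ε := by
  obtain ⟨t, hts, hcov⟩ := hS.elim_nhds_subcover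
    (fun z => Metric.ball z (ε / 3))
    (fun z _ => Metric.ball_mem_nhds z (by linarith))
  have hpt : ∀ z ∈ t, ∃ n : ℕ, ∀ N ≥ n, ‖trunc N z - z‖ ≤ ε / 3 := by
    intro z _
    have := (tendsto_iff_norm_sub_tendsto_zero.mp (tendsto_trunc z))
    rw [Metric.tendsto_atTop] at this
    obtain ⟨n, hn⟩ := this (ε / 3) (by linarith)
    exact ⟨n, fun N hN => by
      have := hn N hN
      rw [Real.dist_eq, sub_zero] at this
      exact le_of_lt (lt_of_le_of_lt (le_abs_self _) this)⟩
  choose! f hf using hpt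
  refine ⟨t.sup f, fun N hN y hy => ?_⟩
  obtain ⟨z, hzt, hyz⟩ := Set.mem_iUnion₂.mp (hcov hy)
  have hdist : ‖y - z‖ < ε / 3 := by
    rw [← dist_eq_norm]; exact Metric.mem_ball.mp hyz
  have hNz : N ≥ f z := le_trans (Finset.le_sup hzt) hN
  have h1 := trunc_lip N y z
  have h2 := hf z hzt N hNz
  calc ‖trunc N y - y‖
      = ‖(trunc N y - trunc N z) + (trunc N z - z) + (z - y)‖ := by
        congr 1
        abel
    _ ≤ ‖trunc N y - trunc N z‖ + ‖trunc N z - z‖ + ‖z - y‖ := norm_add₃_le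
    _ ≤ ‖y - z‖ + (ε / 3) + ‖y - z‖ := by
        rw [norm_sub_rev z y]
        exact add_le_add (add_le_add h1 h2) le_rfl
    _ ≤ ε := by linarith

include hq0 hq1 hU

lemma memK (K : H →L[ℂ] H) (hK : IsCompactOperator ⇑K) :
    K ∈ (StarAlgebra.adjoin ℂ {U}).topologicalClosure := by
  set F : ℕ → H →L[ℂ] H :=
    fun N => ∑ i ∈ Finset.range N, rk (e i) (adjoint K (e i)) with hFdef
  have hFmem : ∀ N, F N ∈ (StarAlgebra.adjoin ℂ {U}).topologicalClosure :=
    fun N => sum_mem fun i _ => memRk hq0 hq1 U hU i _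
  have hFx : ∀ N x, F N x = trunc N (K x) := by
    intro N x
    refine lp.ext (funext fun m => ?_)
    rw [hFdef]
    simp only
    rw [ContinuousLinearMap.sum_apply, lp.coeFn_sum, Finset.sum_apply]
    simp only [rk_coord]
    rw [Finset.sum_ite_eq (Finset.range N) m
      (fun i => ⟪adjoint K (e i), x⟫)]
    rw [trunc_coord]
    simp only [Finset.mem_range]
    by_cases h : m < N
    · rw [if_pos h, if_pos h, ContinuousLinearMap.adjoint_inner_left,
        inner_e_left]
    · rw [if_neg h, if_neg h]
  have htend : Filter.Tendsto F Filter.atTop (nhds K) := by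
    rw [Metric.tendsto_atTop]
    intro ε hε
    set S := closure (K '' Metric.closedBall 0 1) with hSdef
    have hScpt : IsCompact S := hK.isCompact_closure_image_closedBall 1
    obtain ⟨N₀, hN₀⟩ := trunc_uniform hScpt (half_pos hε)
    refine ⟨N₀, fun N hN => ?_⟩
    rw [dist_eq_norm]
    have hb : ‖F N - K‖ ≤ ε / 2 := by
      refine ContinuousLinearMap.opNorm_le_bound _ (by linarith) fun x => ?_
      rcases eq_or_ne x 0 with rfl | hx
      · simp
      · set u : H := ((‖x‖ : ℂ))⁻¹ • x with hu
        have hnx : (‖x‖ : ℂ) ≠ 0 :=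
          Complex.ofReal_ne_zero.mpr (norm_ne_zero_iff.mpr hx)
        have hxu : x = (‖x‖ : ℂ) • u := by
          rw [hu, smul_smul, mul_inv_cancel₀ hnx, one_smul]
        have hun : ‖u‖ = 1 := by
          rw [hu, norm_smul, norm_inv, Complex.norm_real, Real.norm_eq_abs,
            abs_of_nonneg (norm_nonneg _), inv_mul_cancel₀ (norm_ne_zero_iff.mpr hx)]
        have hKu : K u ∈ S := subset_closure ⟨u, by
          simp [Metric.mem_closedBall, dist_zero_right, hun], rfl⟩
        have h1 : ‖(F N - K) u‖ ≤ ε / 2 := by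
          rw [ContinuousLinearMap.sub_apply, hFx]
          exact hN₀ N hN (K u) hKu
        calc ‖(F N - K) x‖ = ‖(F N - K) ((‖x‖ : ℂ) • u)‖ := by rw [← hxu]
          _ = ‖x‖ * ‖(F N - K) u‖ := by
              rw [_root_.map_smul, norm_smul, Complex.norm_real,
                Real.norm_eq_abs, abs_of_nonneg (norm_nonneg _)]
          _ ≤ ‖x‖ * (ε / 2) := mul_le_mul_of_nonneg_left h1 (norm_nonneg _)
          _ = ε / 2 * ‖x‖ := by ring
    linarith
  exact (StarSubalgebra.isClosed_topologicalClosure _).mem_of_tendsto htend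
    (Filter.Eventually.of_forall hFmem)

end Main

end Aux

/-- The commutator `U U* − U* U` is compact and the closed star-subalgebra of
bounded operators generated by `U` contains every compact operator. -/
theorem stmt0 (q : ℝ) (hq0 : 0 < q) (hq1 : q < 1) (U : H →L[ℂ] H)
    (hU : ∀ n : ℕ, U (e n) = (Real.sqrt (1 - q ^ (n + 1)) : ℂ) • e (n + 1)) :
    IsCompactOperator
      ⇑(U * ContinuousLinearMap.adjoint U - ContinuousLinearMap.adjoint U * U) ∧
    ∀ K : H →L[ℂ] H, IsCompactOperator ⇑K →
      K ∈ (StarAlgebra.adjoin ℂ {U}).topologicalClosure := by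
  exact ⟨Aux.comm_compact hq0 hq1 U hU, fun K hK => Aux.memK hq0 hq1 U hU K hK⟩

end
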